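/- Let H, H_ε be Hilbert spaces, A : X^{1/2} → X^{−1/2} and A_ε : X_ε^{1/2} → X_ε^{−1/2} bounded invertible operators given by coercive symmetric bilinear forms a, a_ε with a_ε(u,u) = ‖u‖²_{X_ε^{1/2}}. Suppose h_ε ∈ X_ε^{−1/2} with ‖h_ε‖ ≤ K uniformly, v_ε = A_ε^{−1} h_ε, and along a sequence ε_k → 0: (i) v_{ε_k} E-weakly converges to some v₀ ∈ X^{1/2}, (ii) ⟨h_{ε_k}, v_{ε_k}⟩ → ⟨h₀, v₀⟩ for some h₀ ∈ X^{−1/2}, and (iii) ⟨h_{ε_k}, E_{ε_k} w⟩ → ⟨h₀, w⟩ for all w ∈ X^{1/2}, where the pairings with E-convergent test functions recover the limit form. Then v₀ = A^{−1} h₀ and ‖v_{ε_k}‖²_{X_{ε_k}^{1/2}} → ‖v₀‖²_{X^{1/2}}, hence v_{ε_k} E-converges (strongly) to A^{−1} h₀. -/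

import Mathlib

open Filter Topology

/-- Variational convergence: if `A_ε v_ε = h_ε` in the sense `⟨h_ε, w⟩ = ⟪v_ε, w⟫`, the
`v_{ε_k}` E-weakly converge to `v₀`, the energies `⟨h_{ε_k}, v_{ε_k}⟩` converge to
`⟨h₀, v₀⟩`, and the pairings against `E_{ε_k} w` converge to `⟨h₀, w⟩`, then `v₀ = A⁻¹ h₀`,
the norms converge, and `v_{ε_k}` E-converges strongly to `A⁻¹ h₀`.  (The sequence
`ε_k → 0` is used as the index.) -/
theorem stmt_9 (X : Type*) [NormedAddCommGroup X] [InnerProductSpace ℝ X]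
    (Hk : ℕ → Type*) [∀ k, NormedAddCommGroup (Hk k)] [∀ k, InnerProductSpace ℝ (Hk k)]
    (E : ∀ k, X →L[ℝ] Hk k)
    (hE : ∀ u : X, Tendsto (fun k => ‖E k u‖) atTop (𝓝 ‖u‖))
    (K : ℝ)
    (h : ∀ k, Hk k →L[ℝ] ℝ) (hbdd : ∀ k, ‖h k‖ ≤ K)
    (v : ∀ k, Hk k) (hv : ∀ k, ∀ w : Hk k, h k w = inner ℝ (v k) w)
    (h₀ : X →L[ℝ] ℝ) (v₀ : X)
    (hweak : ∀ w : X,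
      Tendsto (fun k => (inner ℝ (v k) (E k w) : ℝ)) atTop (𝓝 (inner ℝ v₀ w : ℝ)))
    (hpair : Tendsto (fun k => h k (v k)) atTop (𝓝 (h₀ v₀)))
    (htest : ∀ w : X, Tendsto (fun k => h k (E k w)) atTop (𝓝 (h₀ w))) :
    (∀ w : X, h₀ w = inner ℝ v₀ w) ∧
    Tendsto (fun k => ‖v k‖ ^ 2) atTop (𝓝 (‖v₀‖ ^ 2)) ∧
    Tendsto (fun k => ‖v k - E k v₀‖) atTop (𝓝 0) := by
  have hident : ∀ w : X, h₀ w = inner ℝ v₀ w := by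
    intro w
    have h1 := htest w
    have h2 : Tendsto (fun k => h k (E k w)) atTop (𝓝 (inner ℝ v₀ w : ℝ)) := by
      simpa [hv] using hweak w
    exact tendsto_nhds_unique h1 h2
  have hnorm : Tendsto (fun k => ‖v k‖ ^ 2) atTop (𝓝 (‖v₀‖ ^ 2)) := by
    have h1 : Tendsto (fun k => h k (v k)) atTop (𝓝 ((inner ℝ v₀ v₀ : ℝ))) := by
      rw [← hident]; exact hpair
    have h2 : (fun k => h k (v k)) = fun k => ‖v k‖ ^ 2 := by
      funext k; rw [hv k (v k), real_inner_self_eq_norm_sq]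
    rw [h2] at h1
    simpa [real_inner_self_eq_norm_sq] using h1
  refine ⟨hident, hnorm, ?_⟩
  have hsq : Tendsto (fun k => ‖v k - E k v₀‖ ^ 2) atTop (𝓝 0) := by
    have hexp : ∀ k, ‖v k - E k v₀‖ ^ 2
        = ‖v k‖ ^ 2 - 2 * inner ℝ (v k) (E k v₀) + ‖E k v₀‖ ^ 2 := by
      intro k
      rw [norm_sub_sq_real]
    have hEn : Tendsto (fun k => ‖E k v₀‖ ^ 2) atTop (𝓝 (‖v₀‖ ^ 2)) :=
      (hE v₀).pow 2
    have := (hnorm.sub ((hweak v₀).const_mul 2)).add hEn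
    have hlim : ‖v₀‖ ^ 2 - 2 * (inner ℝ v₀ v₀ : ℝ) + ‖v₀‖ ^ 2 = 0 := by
      rw [real_inner_self_eq_norm_sq]; ring
    rw [hlim] at this
    simpa [hexp] using this
  have := hsq.sqrt
  simpa [Real.sqrt_sq (norm_nonneg _), Real.sqrt_zero] using this
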